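/- Consider a finite family (F_i)_{i∈I} of clause-sets whose bipartite incidence graph (between variables and indices i, with an edge between variable v and index i iff v occurs in F_i) is acyclic. If no F_i has a forced assignment, then the union ⋃_{i∈I} F_i has no forced assignment. -/

import Mathlib

namespace Stmt2

def satC (a : ℕ → Bool) (C : Finset (ℕ × Bool)) : Prop := ∃ l ∈ C, a l.1 = l.2

def satF (a : ℕ → Bool) (F : Finset (Finset (ℕ × Bool))) : Prop := ∀ C ∈ F, satC a C

def vars (F : Finset (Finset (ℕ × Bool))) : Finset ℕ := F.biUnion fun C => C.image Prod.fst

/-- `F` has no forced assignments: for every literal `x`, setting `x` to false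
still leaves `F` satisfiable. -/
def noForced (F : Finset (Finset (ℕ × Bool))) : Prop :=
  ∀ x : ℕ × Bool, ∃ a : ℕ → Bool, satF a F ∧ a x.1 = !x.2

/-- The bipartite incidence graph of a family of clause-sets: vertices are variables
(`Sum.inl`) and indices (`Sum.inr`), with an edge between `v` and `i` iff `v ∈ vars (F i)`. -/
def incG {I : Type} (F : I → Finset (Finset (ℕ × Bool))) : SimpleGraph (ℕ ⊕ I) where
  Adj a b :=
    (∃ v i, a = Sum.inl v ∧ b = Sum.inr i ∧ v ∈ vars (F i)) ∨
    (∃ v i, b = Sum.inl v ∧ a = Sum.inr i ∧ v ∈ vars (F i))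
  symm := by
    constructor
    rintro a b (⟨v, i, h1, h2, hv⟩ | ⟨v, i, h1, h2, hv⟩)
    · exact Or.inr ⟨v, i, h1, h2, hv⟩
    · exact Or.inl ⟨v, i, h1, h2, hv⟩
  loopless := by
    constructor
    intro a h
    rcases h with ⟨v, i, h1, h2, _⟩ | ⟨v, i, h1, h2, _⟩ <;> rw [h1] at h2 <;> simp at h2

lemma adj_lr {I : Type} (F : I → Finset (Finset (ℕ × Bool))) {s : ℕ} {t : I}
    (h : s ∈ vars (F t)) : (incG F).Adj (Sum.inl s) (Sum.inr t) :=
  Or.inl ⟨s, t, rfl, rfl, h⟩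

lemma adj_rl {I : Type} (F : I → Finset (Finset (ℕ × Bool))) {s : ℕ} {t : I}
    (h : s ∈ vars (F t)) : (incG F).Adj (Sum.inr t) (Sum.inl s) :=
  Or.inr ⟨s, t, rfl, rfl, h⟩

lemma mem_vars_of_mem {F : Finset (Finset (ℕ × Bool))} {C : Finset (ℕ × Bool)}
    (hC : C ∈ F) {l : ℕ × Bool} (hl : l ∈ C) : l.1 ∈ vars F :=
  Finset.mem_biUnion.mpr ⟨C, hC, Finset.mem_image.mpr ⟨l, hl, rfl⟩⟩

/-- from a chain of index-overlaps inside `T`, a walk in the incidence graph avoiding `inr i`. -/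
lemma walk_of_reach {I : Type} (F : I → Finset (Finset (ℕ × Bool))) {T : Finset I} {i : I}
    (hiT : i ∉ T) {j₁ j₂ : I}
    (h : Relation.ReflTransGen
      (fun j j' => j ∈ T ∧ j' ∈ T ∧ ∃ s, s ∈ vars (F j) ∧ s ∈ vars (F j')) j₁ j₂)
    (hj₁ : j₁ ∈ T) :
    ∃ p : (incG F).Walk (Sum.inr j₁) (Sum.inr j₂), Sum.inr i ∉ p.support := by
  induction h with
  | refl =>
    refine ⟨SimpleGraph.Walk.nil, ?_⟩
    simp only [SimpleGraph.Walk.support_nil, List.mem_singleton]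
    intro hcon
    exact hiT (by rwa [Sum.inr.injEq] at hcon ▸ hj₁)
  | tail hbc hrel ih =>
    obtain ⟨p, hp⟩ := ih
    obtain ⟨hcT, hj2T, s, hs1, hs2⟩ := hrel
    refine ⟨p.append (SimpleGraph.Walk.cons (adj_rl F hs1)
      (SimpleGraph.Walk.cons (adj_lr F hs2) SimpleGraph.Walk.nil)), ?_⟩
    rw [SimpleGraph.Walk.mem_support_append_iff]
    rintro (hmem | hmem)
    · exact hp hmem
    · simp only [SimpleGraph.Walk.support_cons, SimpleGraph.Walk.support_nil,
        List.mem_cons, List.mem_singleton] at hmem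
      rcases hmem with h1 | h1 | h1 | h1
      · exact hiT ((Sum.inr.injEq _ _ ▸ h1 : i = _) ▸ hcT)
      · exact (Sum.inr_ne_inl h1).elim
      · exact hiT ((Sum.inr.injEq _ _ ▸ h1 : i = _) ▸ hj2T)
      · exact (List.not_mem_nil h1)

/-- Acyclicity: `F i` cannot share two distinct variables with a connected
(within `T`) part of the family, `i ∉ T`. -/
lemma shared_unique {I : Type} (F : I → Finset (Finset (ℕ × Bool)))
    (hacyc : (incG F).IsAcyclic) {T : Finset I} {i : I} (hiT : i ∉ T)
    {u w : ℕ} (hu : u ∈ vars (F i)) (hw : w ∈ vars (F i)) {j₁ j₂ : I}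
    (hj1 : j₁ ∈ T) (hj2 : j₂ ∈ T) (hu1 : u ∈ vars (F j₁)) (hw2 : w ∈ vars (F j₂))
    (hreach : Relation.ReflTransGen
      (fun j j' => j ∈ T ∧ j' ∈ T ∧ ∃ s, s ∈ vars (F j) ∧ s ∈ vars (F j')) j₁ j₂) :
    u = w := by
  classical
  by_contra hne
  obtain ⟨p, hp⟩ := walk_of_reach F hiT hreach hj1
  let q : (incG F).Walk (Sum.inl u) (Sum.inl w) :=
    SimpleGraph.Walk.cons (adj_lr F hu1)
      (p.append (SimpleGraph.Walk.cons (adj_rl F hw2) SimpleGraph.Walk.nil))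
  have hq : Sum.inr i ∉ q.support := by
    simp only [q, SimpleGraph.Walk.support_cons, List.mem_cons,
      SimpleGraph.Walk.mem_support_append_iff, SimpleGraph.Walk.support_nil,
      List.mem_singleton]
    rintro (h1 | h1 | h1 | h1)
    · exact Sum.inr_ne_inl h1
    · exact hp h1
    · exact hiT ((Sum.inr.injEq _ _ ▸ h1 : i = _) ▸ hj2)
    · rcases h1 with h1 | h1
      · exact Sum.inr_ne_inl h1
      · exact List.not_mem_nil h1
  let P₂ : (incG F).Path (Sum.inl u) (Sum.inl w) :=
    ⟨SimpleGraph.Walk.cons (adj_lr F hu) (SimpleGraph.Walk.cons (adj_rl F hw)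
      SimpleGraph.Walk.nil), by
        simp [SimpleGraph.Walk.isPath_def, hne]⟩
  have hPeq : q.toPath = P₂ := SimpleGraph.isAcyclic_iff_path_unique.mp hacyc q.toPath P₂
  have hmem : Sum.inr i ∈ q.toPath.1.support := by
    rw [hPeq]; simp [P₂]
  exact hq (SimpleGraph.Walk.support_toPath_subset q hmem)

lemma exists_assign {I : Type} [DecidableEq I]
    (F : I → Finset (Finset (ℕ × Bool)))
    (hacyc : (incG F).IsAcyclic)
    (hnf : ∀ i, noForced (F i)) :
    ∀ (S : Finset I) (v : ℕ) (b : Bool),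
      ∃ a : ℕ → Bool, (∀ j ∈ S, satF a (F j)) ∧ a v = b := by
  intro S
  induction S using Finset.strongInductionOn with
  | _ S IH =>
  intro v b
  classical
  rcases S.eq_empty_or_nonempty with rfl | hS
  · exact ⟨fun _ => b, fun j hj => absurd hj (Finset.notMem_empty j), rfl⟩
  -- choose the index i: one containing v if possible
  obtain ⟨i, hiS, hvi⟩ : ∃ i ∈ S, (v ∈ vars (F i) ∨ ∀ j ∈ S, v ∉ vars (F j)) := by
    by_cases h : ∃ i ∈ S, v ∈ vars (F i)
    · obtain ⟨i, hi, hv⟩ := h; exact ⟨i, hi, Or.inl hv⟩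
    · obtain ⟨i, hi⟩ := hS
      push_neg at h
      exact ⟨i, hi, Or.inr h⟩
  obtain ⟨a₀, ha₀sat, ha₀v⟩ : ∃ a, satF a (F i) ∧ a v = b := by
    obtain ⟨a, h1, h2⟩ := hnf i (v, !b)
    exact ⟨a, h1, by simpa using h2⟩
  set T : Finset I := S.erase i with hTdef
  have hiT : i ∉ T := Finset.notMem_erase i S
  have hTS : T ⊂ S := Finset.erase_ssubset hiS
  set Rel : I → I → Prop :=
    fun j j' => j ∈ T ∧ j' ∈ T ∧ ∃ s, s ∈ vars (F j) ∧ s ∈ vars (F j') with hReldef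
  set Reach : I → I → Prop := Relation.ReflTransGen Rel with hReachdef
  have hRsymm : Symmetric Reach :=
    fun x y h => (@Relation.ReflTransGen.stdSymm _ Rel
      ⟨fun j j' ⟨h1, h2, s, h3, h4⟩ => ⟨h2, h1, s, h4, h3⟩⟩).symm x y h
  -- components
  set comp : I → Finset I := fun j => T.filter (fun j' => Reach j j') with hcompdef
  have comp_subset : ∀ j, comp j ⊆ T := fun j => Finset.filter_subset _ _
  have mem_comp_self : ∀ j ∈ T, j ∈ comp j := fun j hj =>
    Finset.mem_filter.mpr ⟨hj, Relation.ReflTransGen.refl⟩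
  have reach_of_mem_comp : ∀ {j j'}, j' ∈ comp j → Reach j j' :=
    fun h => (Finset.mem_filter.mp h).2
  have comp_eq : ∀ {j j'}, Reach j j' → comp j = comp j' := by
    intro j j' hr
    apply Finset.filter_congr
    intro x _
    exact ⟨fun h => (hRsymm hr).trans h, fun h => hr.trans h⟩
  -- W : the protected variable set
  set W : Finset ℕ := insert v (vars (F i)) with hWdef
  set varsU : Finset I → Finset ℕ := fun K => K.biUnion fun j => vars (F j) with hvarsUdef
  -- uniqueness of the shared variable of each component with W
  have huniq : ∀ j ∈ T, ∀ u w : ℕ, u ∈ W → w ∈ W →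
      u ∈ varsU (comp j) → w ∈ varsU (comp j) → u = w := by
    intro j hj u w huW hwW huc hwc
    obtain ⟨j₁, hj₁, hu1⟩ := Finset.mem_biUnion.mp huc
    obtain ⟨j₂, hj₂, hw2⟩ := Finset.mem_biUnion.mp hwc
    have hreach : Reach j₁ j₂ := (hRsymm (reach_of_mem_comp hj₁)).trans (reach_of_mem_comp hj₂)
    have hnov : ∀ x, x ∈ W → x ∈ vars (F i) ∨ x = v := by
      intro x hx
      rcases Finset.mem_insert.mp hx with h | h
      · exact Or.inr h
      · exact Or.inl h
    have hvW : ∀ x : ℕ, ∀ jx ∈ T, x ∈ W → x ∈ vars (F jx) → x ∈ vars (F i) := by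
      intro x jx hjx hxW hxj
      rcases hnov x hxW with h | rfl
      · exact h
      rcases hvi with h | h
      · exact h
      · exact absurd hxj (h jx (Finset.mem_of_mem_erase hjx))
    exact shared_unique F hacyc hiT
      (hvW u j₁ (comp_subset j hj₁) huW hu1) (hvW w j₂ (comp_subset j hj₂) hwW hw2)
      (comp_subset j hj₁) (comp_subset j hj₂) hu1 hw2 hreach
  -- the chosen shared variable of a component
  set pick : Finset I → ℕ :=
    fun K => if h : ∃ u, u ∈ W ∧ u ∈ varsU K then h.choose else v with hpickdef
  have pick_spec : ∀ K : Finset I, (∃ u, u ∈ W ∧ u ∈ varsU K) →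
      pick K ∈ W ∧ pick K ∈ varsU K := by
    intro K h
    simp only [hpickdef, dif_pos h]
    exact h.choose_spec
  -- the assignment of a component
  set A : Finset I → (ℕ → Bool) := fun K =>
    if h : K ⊆ T then
      (IH K (ssubset_of_subset_of_ssubset h hTS) (pick K) (a₀ (pick K))).choose
    else a₀ with hAdef
  have A_spec : ∀ K : Finset I, K ⊆ T →
      (∀ j ∈ K, satF (A K) (F j)) ∧ A K (pick K) = a₀ (pick K) := by
    intro K h
    simp only [hAdef, dif_pos h]
    exact (IH K (ssubset_of_subset_of_ssubset h hTS) (pick K) (a₀ (pick K))).choose_spec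
  -- the glued assignment
  set a : ℕ → Bool := fun u =>
    if h : ∃ j, j ∈ T ∧ u ∈ vars (F j) then A (comp h.choose) u else a₀ u with hadef
  -- a agrees with a₀ on W
  have hagreeW : ∀ u ∈ W, a u = a₀ u := by
    intro u huW
    by_cases h : ∃ j, j ∈ T ∧ u ∈ vars (F j)
    · have hj := h.choose_spec
      set j₀ := h.choose
      have hcs : comp j₀ ⊆ T := comp_subset j₀
      have huc : u ∈ varsU (comp j₀) :=
        Finset.mem_biUnion.mpr ⟨j₀, mem_comp_self j₀ hj.1, hj.2⟩
      have hpk := pick_spec (comp j₀) ⟨u, huW, huc⟩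
      have hequ : pick (comp j₀) = u := huniq j₀ hj.1 _ _ hpk.1 huW hpk.2 huc
      have := (A_spec (comp j₀) hcs).2
      rw [hequ] at this
      simp only [hadef, dif_pos h]
      exact this
    · simp only [hadef, dif_neg h]
  -- a agrees with A (comp j) on vars (F j), for j ∈ T
  have hagreeT : ∀ j ∈ T, ∀ u ∈ vars (F j), a u = A (comp j) u := by
    intro j hj u hu
    have h : ∃ j', j' ∈ T ∧ u ∈ vars (F j') := ⟨j, hj, hu⟩
    have hj' := h.choose_spec
    have hreach : Reach j h.choose := Relation.ReflTransGen.single ⟨hj, hj'.1, u, hu, hj'.2⟩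
    simp only [hadef, dif_pos h]
    rw [comp_eq hreach]
  refine ⟨a, ?_, ?_⟩
  · intro j hjS
    by_cases hji : j = i
    · subst hji
      intro C hC
      obtain ⟨l, hl, hal⟩ := ha₀sat C hC
      refine ⟨l, hl, ?_⟩
      rw [hagreeW l.1 (Finset.mem_insert_of_mem (mem_vars_of_mem hC hl))]
      exact hal
    · have hjT : j ∈ T := Finset.mem_erase.mpr ⟨hji, hjS⟩
      have hsat := (A_spec (comp j) (comp_subset j)).1 j (mem_comp_self j hjT)
      intro C hC
      obtain ⟨l, hl, hal⟩ := hsat C hC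
      refine ⟨l, hl, ?_⟩
      rw [hagreeT j hjT l.1 (mem_vars_of_mem hC hl)]
      exact hal
  · rw [hagreeW v (Finset.mem_insert_self v _)]
    exact ha₀v

/-- If the incidence graph of a finite family of clause-sets is acyclic and no member has
a forced assignment, then the union has no forced assignment. -/
theorem union_noForced {I : Type} [Fintype I] [DecidableEq I]
    (F : I → Finset (Finset (ℕ × Bool)))
    (hacyc : (incG F).IsAcyclic)
    (hnf : ∀ i, noForced (F i)) :
    noForced (Finset.univ.biUnion F) := by
  intro x
  obtain ⟨a, ha, hav⟩ := exists_assign F hacyc hnf Finset.univ x.1 (!x.2)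
  refine ⟨a, ?_, hav⟩
  intro C hC
  obtain ⟨i, _, hCi⟩ := Finset.mem_biUnion.mp hC
  exact ha i (Finset.mem_univ i) C hCi

end Stmt2
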